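/- Let M be a simple matroid on a linearly ordered ground set with maximal element n. For every ℓ ≥ 0, the number of NBC sets of M of cardinality ℓ equals the number of NBC sets of M \ n of cardinality ℓ plus the number of NBC sets of M/n of cardinality ℓ - 1. -/

import Mathlib

open scoped BigOperators
open scoped Matroid

/-- A circuit: a minimal dependent set. -/
def IsCircuit {n : ℕ} (M : Matroid (Fin n)) (C : Finset (Fin n)) : Prop :=
  M.Dep ↑C ∧ ∀ D : Finset (Fin n), D ⊂ C → ¬ M.Dep ↑D

/-- A broken circuit: a circuit (of size > 1) with its minimum removed. -/
def IsBrokenCircuit {n : ℕ} (M : Matroid (Fin n)) (B : Finset (Fin n)) : Prop :=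
  ∃ (C : Finset (Fin n)) (a : Fin n), IsCircuit M C ∧ 1 < C.card ∧ a ∈ C ∧
    (∀ b ∈ C, a ≤ b) ∧ B = C.erase a

/-- A no-broken-circuit set. -/
def NBCSet {n : ℕ} (M : Matroid (Fin n)) (I : Finset (Fin n)) : Prop :=
  M.Indep ↑I ∧ ∀ B ⊆ I, ¬ IsBrokenCircuit M B

/-- A unidependent set: contains exactly one circuit. -/
def Unidep {n : ℕ} (M : Matroid (Fin n)) (U : Finset (Fin n)) : Prop :=
  ↑U ⊆ M.E ∧ ∃! C : Finset (Fin n), C ⊆ U ∧ IsCircuit M C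

/-- x is a loop. -/
def IsLoopM {n : ℕ} (M : Matroid (Fin n)) (x : Fin n) : Prop := M.Dep {x}

/-- Deletion of a single element. -/
noncomputable def mdel {n : ℕ} (M : Matroid (Fin n)) (x : Fin n) : Matroid (Fin n) :=
  M ↾ (M.E \ {x})

/-- Contraction of a single element, via duality. -/
noncomputable def mcon {n : ℕ} (M : Matroid (Fin n)) (x : Fin n) : Matroid (Fin n) :=
  (M✶ ↾ (M.E \ {x}))✶

open scoped Classical in
/-- The rank of a finite set: maximal cardinality of an independent subset. -/
noncomputable def rkFin {n : ℕ} (M : Matroid (Fin n)) (U : Finset (Fin n)) : ℕ :=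
  (U.powerset.filter fun I : Finset (Fin n) => M.Indep (↑I : Set (Fin n))).sup Finset.card

/-- A simple matroid with ground set everything. -/
def SimpleGround {n : ℕ} (M : Matroid (Fin n)) : Prop :=
  M.E = Set.univ ∧ (∀ i : Fin n, M.Indep {i}) ∧
    ∀ i j : Fin n, i ≠ j → M.Indep {i, j}

/-- Number of inversions of a list. -/
def listInv {n : ℕ} : List (Fin n) → ℕ
  | [] => 0
  | a :: t => (t.countP fun b => decide (b < a)) + listInv t

/-- χ evaluated on an ordered set, with the sign convention χ(X^σ) = sgn(σ) χ(X). -/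
def ochi {n : ℕ} {K : Type*} [Field K] (χ : Finset (Fin n) → K) (l : List (Fin n)) : K :=
  (-1 : K) ^ listInv l * χ l.toFinset

/-- The flag of flats associated to an ordered set: closures of its suffixes. -/
def flagOf {n : ℕ} (M : Matroid (Fin n)) (l : List (Fin n)) : List (Set (Fin n)) :=
  l.tails.map fun t => M.closure ↑t.toFinset

/-- An element `b` is active in `I`: it lies in `cl(I) \ I` and is the minimum of the
(unique) circuit contained in `I ∪ {b}`. -/
def ActiveIn {n : ℕ} (M : Matroid (Fin n)) (I : Finset (Fin n)) (b : Fin n) : Prop :=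
  b ∈ M.closure ↑I ∧ b ∉ I ∧
    ∃ C : Finset (Fin n), C ⊆ insert b I ∧ IsCircuit M C ∧ ∀ c ∈ C, b ≤ c


/-- An inactive unidependent set: `min C(U)` is the minimal active element of
`U \\ min C(U)`. -/
def InactiveUnidep {n : ℕ} (M : Matroid (Fin n)) (U : Finset (Fin n)) : Prop :=
  Unidep M U ∧ ∃ (C : Finset (Fin n)) (a : Fin n), C ⊆ U ∧ IsCircuit M C ∧ a ∈ C ∧
    (∀ b ∈ C, a ≤ b) ∧ ∀ b : Fin n, ActiveIn M (U.erase a) b → a ≤ b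

section Alg

variable {n : ℕ} {K : Type*} [Field K]

/-- The defining relations of the graded algebra `E`: squares of generators vanish and
generators commute up to the nonzero scalars `β i j` (for `i < j`). -/
inductive ERel (n : ℕ) (K : Type*) [Field K] (β : Fin n → Fin n → K) :
    FreeAlgebra K (Fin n) → FreeAlgebra K (Fin n) → Prop
  | sq (i : Fin n) : ERel n K β (FreeAlgebra.ι K i * FreeAlgebra.ι K i) 0
  | comm {i j : Fin n} (h : i < j) :
      ERel n K β (FreeAlgebra.ι K j * FreeAlgebra.ι K i)
        (β i j • (FreeAlgebra.ι K i * FreeAlgebra.ι K j))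

/-- The algebra `E` generated by `e_1, …, e_n` with `e_i² = 0`, `e_j e_i = β i j • e_i e_j`. -/
abbrev EAlg (n : ℕ) (K : Type*) [Field K] (β : Fin n → Fin n → K) := RingQuot (ERel n K β)

/-- The generator `e_i` of `E`. -/
noncomputable def gen (β : Fin n → Fin n → K) (i : Fin n) : EAlg n K β :=
  RingQuot.mkAlgHom K (ERel n K β) (FreeAlgebra.ι K i)

/-- `e_X`: the product of the generators indexed by `X`, in increasing order. -/
noncomputable def eset (β : Fin n → Fin n → K) (X : Finset (Fin n)) : EAlg n K β :=
  ((X.sort (· ≤ ·)).map (gen β)).prod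

/-- The χ-boundary `∂e_X = Σ_p (-1)^p χ(X \ i_p) e_{X \ i_p}` (with `X = {i_1 < … < i_m}`,
`p` running from 1 to m). -/
noncomputable def bdry (β : Fin n → Fin n → K) (χ : Finset (Fin n) → K)
    (X : Finset (Fin n)) : EAlg n K β :=
  (((X.sort (· ≤ ·)).zipIdx.map Prod.swap).map fun pi =>
    ((-1 : K) ^ (pi.1 + 1) * χ (X.erase pi.2)) • eset β (X.erase pi.2)).sum

end Alg

section Chi

variable {n : ℕ} {K : Type*} [Field K]

/-- Condition (UC1). -/
def UC1 (M : Matroid (Fin n)) (χ : Finset (Fin n) → K) : Prop :=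
  ∀ I : Finset (Fin n), χ I ≠ 0 ↔ M.Indep ↑I

/-- Condition (UC2). -/
def UC2 (β : Fin n → Fin n → K) (M : Matroid (Fin n)) (χ : Finset (Fin n) → K) : Prop :=
  ∀ U U' : Finset (Fin n), Unidep M U → Unidep M U' → U' ⊆ U →
    ∃ ε : K, ε ≠ 0 ∧ bdry β χ U = ε • (bdry β χ U' * eset β (U \ U'))

/-- The (right) ideal `I_χ(M)` of `E`, as a `K`-subspace: it is spanned by the products
of the boundaries of circuits of size `> 1` (and of the generators indexed by loops)
with arbitrary elements of `E`. -/
noncomputable def chiIdeal (β : Fin n → Fin n → K) (M : Matroid (Fin n))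
    (χ : Finset (Fin n) → K) : Submodule K (EAlg n K β) :=
  Submodule.span K
    ({ y | ∃ C : Finset (Fin n), IsCircuit M C ∧ 1 < C.card ∧
        ∃ z : EAlg n K β, y = bdry β χ C * z } ∪
     { y | ∃ i : Fin n, IsCircuit M {i} ∧ ∃ z : EAlg n K β, y = gen β i * z })

/-- The χ-algebra `A_χ(M) = E / I_χ(M)` (as a `K`-vector space). -/
abbrev AChi (β : Fin n → Fin n → K) (M : Matroid (Fin n)) (χ : Finset (Fin n) → K) :=
  EAlg n K β ⧸ chiIdeal β M χ

/-- The residue class `[e_X]` in `A_χ(M)`. -/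
noncomputable def cls (β : Fin n → Fin n → K) (M : Matroid (Fin n))
    (χ : Finset (Fin n) → K) (X : Finset (Fin n)) : AChi β M χ :=
  Submodule.Quotient.mk (eset β X)

/-- The induced map `χ_{M/x}`, `I ↦ χ(I * x)`. -/
def chiC (χ : Finset (Fin n) → K) (x : Fin n) : Finset (Fin n) → K :=
  fun I => ochi χ (I.sort (· ≤ ·) ++ [x])

/-- Iterated single-element contraction along a list (the head is contracted last). -/
noncomputable def contrList (M : Matroid (Fin n)) : List (Fin n) → Matroid (Fin n)
  | [] => M
  | x :: t => mcon (contrList M t) x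

/-- Iterated induced `χ` along a list. -/
def chiL (χ : Finset (Fin n) → K) : List (Fin n) → (Finset (Fin n) → K)
  | [] => χ
  | x :: t => chiC (chiL χ t) x

/-- The iterated residue `p_{I^σ} = p_{i_{σ(1)}} ∘ ⋯ ∘ p_{i_{σ(ℓ)}}` associated to a family
`P` of single-element residue maps and an ordered set (a list). -/
noncomputable def pIter (β : Fin n → Fin n → K)
    (P : ∀ (M : Matroid (Fin n)) (χ : Finset (Fin n) → K) (x : Fin n),
      AChi β M χ →ₗ[K] AChi β (mcon M x) (chiC χ x))
    (M : Matroid (Fin n)) (χ : Finset (Fin n) → K) :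
    (l : List (Fin n)) → (AChi β M χ →ₗ[K] AChi β (contrList M l) (chiL χ l))
  | [] => LinearMap.id
  | x :: t => (P (contrList M t) (chiL χ t) x).comp (pIter β P M χ t)

/-- The defining property of the residue map `p_x` on (classes of) independent sets. -/
def ResFormula (β : Fin n → Fin n → K)
    (P : ∀ (M : Matroid (Fin n)) (χ : Finset (Fin n) → K) (x : Fin n),
      AChi β M χ →ₗ[K] AChi β (mcon M x) (chiC χ x)) : Prop :=
  ∀ (M : Matroid (Fin n)) (χ : Finset (Fin n) → K) (x : Fin n), ¬ IsLoopM M x →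
    ∀ I : Finset (Fin n), M.Indep ↑I →
      (x ∈ I → P M χ x (cls β M χ I) = cls β (mcon M x) (chiC χ x) (I.erase x)) ∧
      (∀ y ∈ I, IsCircuit M {x, y} → P M χ x (cls β M χ I) =
        (ochi χ ((I.erase y).sort (· ≤ ·) ++ [x]) /
          ochi χ ((I.erase y).sort (· ≤ ·) ++ [y])) •
            cls β (mcon M x) (chiC χ x) (I.erase y)) ∧
      (x ∉ I → (∀ y ∈ I, ¬ IsCircuit M {x, y}) → P M χ x (cls β M χ I) = 0)

end Chi

section NBCCountAux

variable {n : ℕ} {M : Matroid (Fin n)} {x : Fin n}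

lemma exists_circuit_subset (N : Matroid (Fin n)) (D : Finset (Fin n)) (hD : N.Dep ↑D) :
    ∃ C, C ⊆ D ∧ IsCircuit N C := by
  induction D using Finset.strongInduction with
  | _ D ih =>
    by_cases h : ∀ D' : Finset (Fin n), D' ⊂ D → ¬ N.Dep ↑D'
    · exact ⟨D, subset_rfl, hD, h⟩
    · push_neg at h
      obtain ⟨D', hss, hdep⟩ := h
      obtain ⟨C, hCD, hC⟩ := ih D' hss hdep
      exact ⟨C, hCD.trans hss.subset, hC⟩

lemma circuit_nonempty {N : Matroid (Fin n)} {C : Finset (Fin n)} (h : IsCircuit N C) :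
    C.Nonempty := by
  have := h.1.nonempty; simpa using this

lemma indep_no_circuit {N : Matroid (Fin n)} {I C : Finset (Fin n)} (hI : N.Indep ↑I)
    (hC : IsCircuit N C) (hCI : C ⊆ I) : False :=
  hC.1.not_indep (hI.subset (by exact_mod_cast hCI))

lemma mdel_indep (hE : M.E = Set.univ) {I : Finset (Fin n)} :
    (mdel M x).Indep ↑I ↔ M.Indep ↑I ∧ x ∉ I := by
  rw [mdel, Matroid.restrict_indep_iff, hE]
  simp [Set.subset_diff, Set.disjoint_singleton_right]

lemma mdel_dep (hE : M.E = Set.univ) {D : Finset (Fin n)} :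
    (mdel M x).Dep ↑D ↔ M.Dep ↑D ∧ x ∉ D := by
  rw [mdel, Matroid.restrict_dep_iff, Matroid.dep_iff, hE]
  simp [Set.subset_diff, Set.disjoint_singleton_right]

lemma mdel_circuit (hE : M.E = Set.univ) {C : Finset (Fin n)} :
    IsCircuit (mdel M x) C ↔ IsCircuit M C ∧ x ∉ C := by
  constructor
  · rintro ⟨hd, hmin⟩
    rw [mdel_dep hE] at hd
    refine ⟨⟨hd.1, fun D hD hdep => hmin D hD ?_⟩, hd.2⟩
    exact (mdel_dep hE).mpr ⟨hdep, fun hx => hd.2 (hD.subset hx)⟩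
  · rintro ⟨⟨hd, hmin⟩, hx⟩
    refine ⟨(mdel_dep hE).mpr ⟨hd, hx⟩, fun D hD hdep => hmin D hD ?_⟩
    exact ((mdel_dep hE).mp hdep).1
/-- bases of the restriction to E \ {x} are bases avoiding x, if some base avoids x -/
lemma restrict_base_iff' {B : Set (Fin n)} (hE : M.E = Set.univ)
    (h0 : ∃ B0, M.IsBase B0 ∧ x ∉ B0) :
    (M ↾ (M.E \ {x})).IsBase B ↔ M.IsBase B ∧ x ∉ B := by
  obtain ⟨B0, hB0, hxB0⟩ := h0
  constructor
  · intro hB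
    have hBmax := Matroid.isBase_iff_maximal_indep.mp hB
    obtain ⟨hBi', hmax⟩ := hBmax
    rw [Matroid.restrict_indep_iff] at hBi'
    obtain ⟨hBi, hBsub'⟩ := hBi'
    rw [hE] at hBsub'
    have hxB : x ∉ B := fun h => (hBsub' h).2 rfl
    obtain ⟨B₂, hB₂, hBB₂⟩ := hBi.exists_isBase_superset
    have hsub2 : B₂ ⊆ insert x B := by
      intro e he
      by_cases hex : e = x
      · simp [hex]
      · right
        by_contra heB
        have : (M ↾ (M.E \ {x})).Indep (insert e B) := by
          rw [Matroid.restrict_indep_iff]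
          refine ⟨hB₂.indep.subset (Set.insert_subset he hBB₂), ?_⟩
          rw [hE]
          exact Set.insert_subset ⟨trivial, hex⟩ hBsub'
        have := hmax this (Set.subset_insert e B)
        exact heB (this (Set.mem_insert e B))
    by_cases hxB₂ : x ∈ B₂
    · exfalso
      obtain ⟨y, hy, hBase⟩ := hB₂.exchange hB0 ⟨hxB₂, hxB0⟩
      have hB₂x : B₂ \ {x} = B := by
        apply Set.Subset.antisymm
        · intro e ⟨he, hex⟩
          rcases hsub2 he with h | h
          · exact absurd h hex
          · exact h
        · intro e he
          exact ⟨hBB₂ he, fun h => hxB (h ▸ he)⟩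
      rw [hB₂x] at hBase
      have hyx : y ≠ x := fun h => hy.2 (h ▸ hxB₂)
      have : (M ↾ (M.E \ {x})).Indep (insert y B) := by
        rw [Matroid.restrict_indep_iff]
        refine ⟨hBase.indep, ?_⟩
        rw [hE]
        exact Set.insert_subset ⟨trivial, hyx⟩ hBsub'
      have := hmax this (Set.subset_insert y B)
      exact hy.2 (hBB₂ (this (Set.mem_insert y B)))
    · have : B₂ ⊆ B := fun e he => (hsub2 he).resolve_left (fun h => hxB₂ (h ▸ he))
      rw [Set.Subset.antisymm this hBB₂] at hB₂
      exact ⟨hB₂, hxB⟩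
  · rintro ⟨hB, hxB⟩
    rw [Matroid.isBase_iff_maximal_indep]
    have hind : (M ↾ (M.E \ {x})).Indep B := by
      rw [Matroid.restrict_indep_iff, hE]
      exact ⟨hB.indep, fun e he => ⟨trivial, fun h => hxB (h ▸ he)⟩⟩
    refine ⟨hind, fun J hJ hBJ => ?_⟩
    rw [Matroid.restrict_indep_iff] at hJ
    intro e he
    by_contra heB
    exact heB (hB.mem_of_insert_indep (hJ.1.subset (Set.insert_subset he hBJ)))

lemma mcon_indep (hE : M.E = Set.univ) (hx : M.Indep {x}) {I : Finset (Fin n)} :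
    (mcon M x).Indep ↑I ↔ M.Indep ↑(insert x I) ∧ x ∉ I := by
  have hEd : M✶.E = Set.univ := by rw [Matroid.dual_ground, hE]
  have h0 : ∃ B0, M✶.IsBase B0 ∧ x ∉ B0 := by
    obtain ⟨B', hB', hxB'⟩ := hx.exists_isBase_superset
    exact ⟨M.E \ B', hB'.compl_isBase_dual, fun h => h.2 (hxB' rfl)⟩
  have hgr : M✶.E \ {x} = M.E \ {x} := by rw [Matroid.dual_ground]
  rw [mcon, Matroid.dual_indep_iff_exists']
  constructor
  · rintro ⟨hIsub, B, hB, hdisj⟩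
    rw [Matroid.restrict_ground_eq] at hIsub
    have hxI : x ∉ I := fun h => (hIsub h).2 rfl
    rw [← hgr, restrict_base_iff' hEd h0] at hB
    obtain ⟨hB, hxB⟩ := hB
    have hB₁ : M.IsBase (M.E \ B) := hB.compl_isBase_of_dual
    refine ⟨hB₁.indep.subset ?_, hxI⟩
    push_cast
    refine Set.insert_subset ⟨by rw [hE]; trivial, hxB⟩ ?_
    intro e he
    exact ⟨by rw [hE]; trivial, fun h => hdisj.ne_of_mem he h rfl⟩
  · rintro ⟨hind, hxI⟩
    obtain ⟨B₁, hB₁, hsub⟩ := hind.exists_isBase_superset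
    rw [Finset.coe_insert] at hsub
    refine ⟨?_, M.E \ B₁, ?_, ?_⟩
    · rw [Matroid.restrict_ground_eq, hE]
      exact fun e he => ⟨trivial, fun h => hxI (h ▸ he)⟩
    · rw [← hgr, restrict_base_iff' hEd h0]
      exact ⟨hB₁.compl_isBase_dual, fun h => h.2 (hsub (Set.mem_insert x _))⟩
    · exact Set.disjoint_left.mpr fun e he h => h.2 (hsub (Set.mem_insert_of_mem _ he))

lemma mcon_ground (hE : M.E = Set.univ) : (mcon M x).E = Set.univ \ {x} := by
  rw [mcon, Matroid.dual_ground, Matroid.restrict_ground_eq, hE]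

lemma mcon_dep (hE : M.E = Set.univ) (hx : M.Indep {x}) {D : Finset (Fin n)} :
    (mcon M x).Dep ↑D ↔ ¬ M.Indep ↑(insert x D) ∧ x ∉ D := by
  rw [Matroid.dep_iff, mcon_ground hE]
  constructor
  · rintro ⟨hni, hsub⟩
    have hxD : x ∉ D := fun h => (hsub h).2 rfl
    refine ⟨fun h => hni ((mcon_indep hE hx).mpr ⟨h, hxD⟩), hxD⟩
  · rintro ⟨hni, hxD⟩
    refine ⟨fun h => hni ((mcon_indep hE hx).mp h).1,
      fun e he => ⟨trivial, fun h => hxD (h ▸ he)⟩⟩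

lemma circuit_card (hM : SimpleGround M) {C : Finset (Fin n)} (hC : IsCircuit M C) :
    1 < C.card := by
  rcases Nat.lt_or_ge C.card 2 with h | h
  · exfalso
    interval_cases h' : C.card
    · rw [Finset.card_eq_zero.mp h'] at hC
      exact hC.1.not_indep (by simpa using M.empty_indep)
    · obtain ⟨i, rfl⟩ := Finset.card_eq_one.mp h'
      exact hC.1.not_indep (by simpa using hM.2.1 i)
  · exact h

lemma mcon_circuit_card (hM : SimpleGround M) {C : Finset (Fin n)}
    (hC : IsCircuit (mcon M x) C) : 1 < C.card := by
  rcases Nat.lt_or_ge C.card 2 with h | h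
  · exfalso
    interval_cases h' : C.card
    · rw [Finset.card_eq_zero.mp h'] at hC
      exact hC.1.not_indep (by simpa using (mcon M x).empty_indep)
    · obtain ⟨i, rfl⟩ := Finset.card_eq_one.mp h'
      have := (mcon_dep hM.1 (hM.2.1 x)).mp hC.1
      have hix : x ≠ i := fun h => this.2 (by simp [h])
      exact this.1 (by simpa using hM.2.2 x i hix)
  · exact h

/-- the minimum of a big circuit is strictly below the max element x -/
lemma min_ne_max (hmax : ∀ y : Fin n, y ≤ x) {C : Finset (Fin n)} {a : Fin n}
    (hcard : 1 < C.card) (haC : a ∈ C) (hamin : ∀ b ∈ C, a ≤ b) : a ≠ x := by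
  intro h
  obtain ⟨u, hu, v, hv, huv⟩ := Finset.one_lt_card.mp hcard
  have hu' : u = a := le_antisymm ((hmax u).trans h.symm.le) (hamin u hu)
  have hv' : v = a := le_antisymm ((hmax v).trans h.symm.le) (hamin v hv)
  exact huv (hu'.trans hv'.symm)

/-- Claim A -/
lemma nbc_del_iff (hM : SimpleGround M) (hmax : ∀ y : Fin n, y ≤ x) {I : Finset (Fin n)}
    (hxI : x ∉ I) : NBCSet M I ↔ NBCSet (mdel M x) I := by
  constructor
  · rintro ⟨hind, hnb⟩
    refine ⟨(mdel_indep hM.1).mpr ⟨hind, hxI⟩, fun B hB hbc => ?_⟩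
    obtain ⟨C, a, hC, hcard, haC, hamin, rfl⟩ := hbc
    exact hnb _ hB ⟨C, a, ((mdel_circuit hM.1).mp hC).1, hcard, haC, hamin, rfl⟩
  · rintro ⟨hind, hnb⟩
    refine ⟨((mdel_indep hM.1).mp hind).1, fun B hB hbc => ?_⟩
    obtain ⟨C, a, hC, hcard, haC, hamin, rfl⟩ := hbc
    have hxC : x ∉ C := by
      intro hxC
      have hax : a ≠ x := min_ne_max hmax hcard haC hamin
      exact hxI (hB (Finset.mem_erase.mpr ⟨fun h => hax h.symm, hxC⟩))
    exact hnb _ hB ⟨C, a, (mdel_circuit hM.1).mpr ⟨hC, hxC⟩, hcard, haC, hamin, rfl⟩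

/-- Claim B, forward direction -/
lemma nbc_con_of_mem (hM : SimpleGround M) (hmax : ∀ y : Fin n, y ≤ x) {I : Finset (Fin n)}
    (hxI : x ∈ I) (hI : NBCSet M I) : NBCSet (mcon M x) (I.erase x) := by
  have hE := hM.1
  refine ⟨(mcon_indep hE (hM.2.1 x)).mpr ⟨by rw [Finset.insert_erase hxI]; exact hI.1,
    Finset.notMem_erase x I⟩, ?_⟩
  intro B hB hbc
  obtain ⟨C', a, hC', hcard, haC', hamin, rfl⟩ := hbc
  have hd := (mcon_dep hE (hM.2.1 x)).mp hC'.1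
  have hxC' : x ∉ C' := hd.2
  have hdep : M.Dep ↑(insert x C') :=
    Matroid.dep_of_not_indep hd.1 (by rw [hE]; exact Set.subset_univ _)
  obtain ⟨C, hCsub, hC⟩ := exists_circuit_subset M _ hdep
  by_cases hxC : x ∈ C
  · by_cases haC : a ∈ C
    · refine hI.2 (C.erase a) ?_ ⟨C, a, hC, ?_, haC, ?_, rfl⟩
      · intro c hc
        obtain ⟨hca, hcC⟩ := Finset.mem_erase.mp hc
        rcases Finset.mem_insert.mp (hCsub hcC) with rfl | hcC'
        · exact hxI
        · exact (Finset.erase_subset x I) (hB (Finset.mem_erase.mpr ⟨hca, hcC'⟩))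
      · exact Finset.one_lt_card.mpr ⟨x, hxC, a, haC, fun h => hxC' (h ▸ haC')⟩
      · intro b hb
        rcases Finset.mem_insert.mp (hCsub hb) with rfl | hbC'
        · exact hmax a
        · exact hamin b hbC'
    · refine indep_no_circuit hI.1 hC ?_
      intro c hc
      rcases Finset.mem_insert.mp (hCsub hc) with rfl | hcC'
      · exact hxI
      · exact (Finset.erase_subset x I) (hB (Finset.mem_erase.mpr ⟨fun h => haC (h ▸ hc), hcC'⟩))
  · have hCC' : C ⊆ C' := fun c hc =>
      (Finset.mem_insert.mp (hCsub hc)).resolve_left (fun h => hxC (h ▸ hc))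
    have hdep2 : (mcon M x).Dep ↑C := by
      rw [mcon_dep hE (hM.2.1 x)]
      exact ⟨fun h => hC.1.not_indep
        (h.subset (Finset.coe_subset.mpr (Finset.subset_insert x C))), hxC⟩
    have hCeq : C = C' := by
      by_contra hne
      exact hC'.2 C (lt_of_le_of_ne hCC' hne) hdep2
    exact hI.2 (C'.erase a) (hB.trans (Finset.erase_subset x I))
      ⟨C', a, hCeq ▸ hC, hcard, haC', hamin, rfl⟩

/-- Claim B, reverse direction -/
lemma nbc_insert_of_con (hM : SimpleGround M) (hmax : ∀ y : Fin n, y ≤ x) {J : Finset (Fin n)}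
    (hJ : NBCSet (mcon M x) J) : x ∉ J ∧ NBCSet M (insert x J) := by
  have hE := hM.1
  have hxJ : x ∉ J := by
    have := hJ.1.subset_ground
    rw [mcon_ground hE] at this
    exact fun h => (this h).2 rfl
  have hind := (mcon_indep hE (hM.2.1 x)).mp hJ.1
  refine ⟨hxJ, hind.1, ?_⟩
  intro B hB hbc
  obtain ⟨C, a, hC, hcard, haC, hamin, rfl⟩ := hbc
  have hdep : (mcon M x).Dep ↑(C.erase x) := by
    rw [mcon_dep hE (hM.2.1 x)]
    refine ⟨fun h => hC.1.not_indep
      (h.subset (Finset.coe_subset.mpr (Finset.subset_insert_iff.mpr subset_rfl))),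
      Finset.notMem_erase x C⟩
  obtain ⟨C'', hC''sub, hC''⟩ := exists_circuit_subset _ _ hdep
  by_cases haC'' : a ∈ C''
  · refine hJ.2 (C''.erase a) ?_ ⟨C'', a, hC'', mcon_circuit_card hM hC'', haC'',
      fun b hb => hamin b (Finset.mem_of_mem_erase (hC''sub hb)), rfl⟩
    intro c hc
    obtain ⟨hca, hcC''⟩ := Finset.mem_erase.mp hc
    obtain ⟨hcx, hcC⟩ := Finset.mem_erase.mp (hC''sub hcC'')
    exact (Finset.mem_insert.mp (hB (Finset.mem_erase.mpr ⟨hca, hcC⟩))).resolve_left hcx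
  · refine indep_no_circuit hJ.1 hC'' ?_
    intro c hc
    obtain ⟨hcx, hcC⟩ := Finset.mem_erase.mp (hC''sub hc)
    exact (Finset.mem_insert.mp
      (hB (Finset.mem_erase.mpr ⟨fun h => haC'' (h ▸ hc), hcC⟩))).resolve_left hcx


end NBCCountAux

/-- `#NBC_ℓ(M) = #NBC_ℓ(M\x) + #NBC_{ℓ-1}(M/x)` for the maximal element `x`
of a simple matroid. -/
theorem nbc_count {n : ℕ} (M : Matroid (Fin n)) (hM : SimpleGround M) (x : Fin n)
    (hmax : ∀ y : Fin n, y ≤ x) (ℓ : ℕ) :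
    {I : Finset (Fin n) | NBCSet M I ∧ I.card = ℓ}.ncard =
      {I : Finset (Fin n) | NBCSet (mdel M x) I ∧ I.card = ℓ}.ncard +
      {I : Finset (Fin n) | NBCSet (mcon M x) I ∧ I.card + 1 = ℓ}.ncard := by
  
  classical
  have hE := hM.1
  set S := {I : Finset (Fin n) | NBCSet M I ∧ I.card = ℓ} with hS
  have hsplit : S = (S ∩ {I | x ∉ I}) ∪ (S ∩ {I | x ∈ I}) := by
    ext I
    by_cases h : x ∈ I <;> simp [h]
  have h1 : S ∩ {I | x ∉ I} = {I : Finset (Fin n) | NBCSet (mdel M x) I ∧ I.card = ℓ} := by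
    ext I
    simp only [hS, Set.mem_inter_iff, Set.mem_setOf_eq]
    constructor
    · rintro ⟨⟨h, hc⟩, hx⟩
      exact ⟨(nbc_del_iff hM hmax hx).mp h, hc⟩
    · rintro ⟨h, hc⟩
      have hxI : x ∉ I := by
        have hsub := h.1.subset_ground
        rw [mdel, Matroid.restrict_ground_eq] at hsub
        exact fun hm => (hsub hm).2 rfl
      exact ⟨⟨(nbc_del_iff hM hmax hxI).mpr h, hc⟩, hxI⟩
  have h2 : {I : Finset (Fin n) | NBCSet (mcon M x) I ∧ I.card + 1 = ℓ} =
      (fun I : Finset (Fin n) => I.erase x) '' (S ∩ {I | x ∈ I}) := by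
    ext J
    simp only [hS, Set.mem_image, Set.mem_inter_iff, Set.mem_setOf_eq]
    constructor
    · rintro ⟨hJ, hc⟩
      obtain ⟨hxJ, hnb⟩ := nbc_insert_of_con hM hmax hJ
      exact ⟨insert x J, ⟨⟨hnb, by rw [Finset.card_insert_of_notMem hxJ, hc]⟩,
        Finset.mem_insert_self x J⟩, by rw [Finset.erase_insert hxJ]⟩
    · rintro ⟨I, ⟨⟨hI, hc⟩, hxI⟩, rfl⟩
      refine ⟨nbc_con_of_mem hM hmax hxI hI, ?_⟩
      have hpos := Finset.card_pos.mpr ⟨x, hxI⟩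
      rw [Finset.card_erase_of_mem hxI]
      omega
  have hdisj : Disjoint (S ∩ {I | x ∉ I}) (S ∩ {I | x ∈ I}) :=
    Set.disjoint_left.mpr fun I hI hI' => hI.2 hI'.2
  have hinj : Set.InjOn (fun I : Finset (Fin n) => I.erase x) (S ∩ {I | x ∈ I}) := by
    intro I hI J hJ h
    simp only at h
    rw [← Finset.insert_erase hI.2, h, Finset.insert_erase hJ.2]
  calc S.ncard = ((S ∩ {I | x ∉ I}) ∪ (S ∩ {I | x ∈ I})).ncard := by rw [← hsplit]
    _ = (S ∩ {I | x ∉ I}).ncard + (S ∩ {I | x ∈ I}).ncard :=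
        Set.ncard_union_eq hdisj (Set.toFinite _) (Set.toFinite _)
    _ = _ := by rw [h1, h2, Set.ncard_image_of_injOn hinj]
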